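/- In the polynomial ring $R = \mathbb{C}[\xi_1, \dots, \xi_{n-1}]$ (with $n \ge 2$, grading $\deg \xi_i = 2$), the sequence of elements $g_k := \xi_k(\xi_k - \tfrac12 \xi_{k-1} - \tfrac12 \xi_{k+1})$ for $k = 1, \dots, n-1$ (with the convention $\xi_0 = \xi_n = 0$) is a regular sequence. -/

import Mathlib

/-- Basic non-zero-divisor-mod-ideal predicate. -/
def NZD {R : Type*} [CommRing R] (I : Ideal R) (g : R) : Prop :=
  ∀ f, g * f ∈ I → f ∈ I

section basic
variable {R S : Type*} [CommRing R] [CommRing S]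

lemma NZD.bot {g : R} [IsDomain R] (hg : g ≠ 0) : NZD (⊥ : Ideal R) g := by
  intro f hf
  simp only [Ideal.mem_bot] at hf ⊢
  rcases mul_eq_zero.mp hf with h | h
  · exact absurd h hg
  · exact h

lemma NZD.mul {I : Ideal R} {a b : R} (ha : NZD I a) (hb : NZD I b) : NZD I (a * b) := by
  intro f hf
  rw [mul_assoc] at hf
  exact hb f (ha _ hf)

lemma NZD.unit_mul {I : Ideal R} {a u : R} (hu : IsUnit u) (ha : NZD I a) :
    NZD I (u * a) := by
  intro f hf
  obtain ⟨v, hv⟩ := hu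
  have h1 : a * (u * f) ∈ I := by
    have : a * (u * f) = u * a * f := by ring
    rw [this]; exact hf
  have h2 := ha _ h1
  have : f = (↑v⁻¹ : R) * (u * f) := by rw [← mul_assoc, ← hv]; simp
  rw [this]
  exact Ideal.mul_mem_left _ _ h2

lemma NZD.C_mul {σ : Type*} {I : Ideal (MvPolynomial σ ℂ)} {a : MvPolynomial σ ℂ}
    {c : ℂ} (hc : c ≠ 0) (ha : NZD I a) : NZD I (MvPolynomial.C c * a) :=
  NZD.unit_mul (IsUnit.map _ (Ne.isUnit hc)) ha

/-- Swap lemma. -/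
lemma NZD.swap {I : Ideal R} {a b : R} (ha : NZD I a)
    (hb : NZD (I ⊔ Ideal.span {a}) b) : NZD (I ⊔ Ideal.span {b}) a := by
  intro f hf
  rw [Submodule.mem_sup] at hf
  obtain ⟨i, hi, z, hz, hizf⟩ := hf
  rw [Ideal.mem_span_singleton] at hz
  obtain ⟨g, rfl⟩ := hz
  -- i + b * g = a * f
  have hbg : b * g ∈ I ⊔ Ideal.span {a} := by
    have he : b * g = a * f - i := by linear_combination hizf
    rw [he]
    exact Submodule.sub_mem _
      (Ideal.mem_sup_right (Ideal.mem_span_singleton.mpr ⟨f, rfl⟩))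
      (Ideal.mem_sup_left hi)
  have hg : g ∈ I ⊔ Ideal.span {a} := hb g hbg
  rw [Submodule.mem_sup] at hg
  obtain ⟨i', hi', z, hz, hizg⟩ := hg
  rw [Ideal.mem_span_singleton] at hz
  obtain ⟨h, rfl⟩ := hz
  -- i' + a * h = g,  so a * (f - b * h) = i + b * i' ∈ I
  have hkey : a * (f - b * h) ∈ I := by
    have he : a * (f - b * h) = i + b * i' := by linear_combination -hizf - b * hizg
    rw [he]
    exact Submodule.add_mem _ hi (Ideal.mul_mem_left _ _ hi')
  have hfb := ha _ hkey
  have he : f = (f - b * h) + b * h := by ring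
  rw [he]
  exact Submodule.add_mem _ (Ideal.mem_sup_left hfb)
    (Ideal.mem_sup_right (Ideal.mem_span_singleton.mpr ⟨h, rfl⟩))

/-- Pull an NZD statement back along a surjective ring hom whose kernel lies in the ideal. -/
lemma NZD.pull (φ : R →+* S) (hs : Function.Surjective φ) {J : Ideal R} {g : R}
    (hker : RingHom.ker φ ≤ J) (h : NZD (J.map φ) (φ g)) : NZD J g := by
  intro f hf
  have h1 : φ g * φ f ∈ J.map φ := by
    rw [← map_mul]; exact Ideal.mem_map_of_mem _ hf
  have h2 : φ f ∈ J.map φ := h _ h1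
  have h3 : f ∈ Ideal.comap φ (J.map φ) := Ideal.mem_comap.mpr h2
  rw [Ideal.comap_map_of_surjective φ hs] at h3
  refine (sup_le le_rfl (le_trans (le_of_eq ?_) hker)) h3
  ext x
  simp [RingHom.mem_ker, Ideal.mem_comap]

/-- The key polynomial lemma: if `d` is NZD mod `J`, then `C c + C d * X` is NZD
mod the extension of `J` to the polynomial ring. -/
lemma NZD.poly {J : Ideal R} {c d : R} (hd : NZD J d) :
    NZD (J.map (Polynomial.C : R →+* Polynomial R)) (Polynomial.C c + Polynomial.C d * Polynomial.X) := by
  intro f hf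
  rw [Ideal.mem_map_C_iff] at hf ⊢
  have key : ∀ k n, f.natDegree < n + k → f.coeff n ∈ J := by
    intro k
    induction k with
    | zero => intro n hn; rw [Polynomial.coeff_eq_zero_of_natDegree_lt (by omega)]
              exact Submodule.zero_mem _
    | succ k ih =>
      intro n hn
      by_cases hc : f.natDegree < n + k
      · exact ih n hc
      have h1 : f.coeff (n+1) ∈ J := ih (n+1) (by omega)
      have h2 := hf (n+1)
      have h3 : ((Polynomial.C c + Polynomial.C d * Polynomial.X) * f).coeff (n+1)
          = c * f.coeff (n+1) + d * f.coeff n := by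
        rw [add_mul, Polynomial.coeff_add, Polynomial.coeff_C_mul, mul_assoc,
          Polynomial.coeff_C_mul, Polynomial.coeff_X_mul]
      rw [h3] at h2
      have h4 : d * f.coeff n ∈ J := by
        have he : d * f.coeff n = (c * f.coeff (n+1) + d * f.coeff n) - c * f.coeff (n+1) := by
          ring
        rw [he]
        exact Submodule.sub_mem _ h2 (Ideal.mul_mem_left _ _ h1)
      exact hd _ h4
  intro n
  exact key (f.natDegree + 1) n (by omega)

end basic

open MvPolynomial

noncomputable section plumbing

set_option linter.unusedSectionVars false
variable {σ : Type} [DecidableEq σ] (t : σ)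

/-- Inclusion of the polynomial ring on the variables other than `t`. -/
def embT : MvPolynomial {s : σ // s ≠ t} ℂ →ₐ[ℂ] MvPolynomial σ ℂ :=
  rename Subtype.val

/-- Kill the variable `t`, substituting `a` for it. -/
def killT (a : MvPolynomial {s : σ // s ≠ t} ℂ) :
    MvPolynomial σ ℂ →ₐ[ℂ] MvPolynomial {s : σ // s ≠ t} ℂ :=
  aeval (fun s => if h : s = t then a else X ⟨s, h⟩)

/-- The iso with the polynomial ring in `X t`. -/
def eT : MvPolynomial σ ℂ ≃ₐ[ℂ] Polynomial (MvPolynomial {s : σ // s ≠ t} ℂ) :=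
  (renameEquiv ℂ (Equiv.optionSubtypeNe t).symm).trans (optionEquivLeft ℂ _)

@[simp] lemma embT_X (s : {s : σ // s ≠ t}) : embT t (X s) = X s.val := by
  simp [embT]

@[simp] lemma killT_X_self (a) : killT t a (X t) = a := by
  simp [killT]

lemma killT_X_ne (a) {s : σ} (h : s ≠ t) : killT t a (X s) = X ⟨s, h⟩ := by
  simp [killT, h]

@[simp] lemma killT_embT (a) (p) : killT t a (embT t p) = p := by
  have h : (killT t a).comp (embT t) = AlgHom.id ℂ _ := by
    apply algHom_ext
    intro s
    simp [embT, killT, s.2]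
  exact DFunLike.congr_fun h p

lemma killT_surjective (a) : Function.Surjective (killT t a) :=
  fun p => ⟨embT t p, killT_embT t a p⟩

lemma sub_embT_killT_mem (a) (p) :
    p - embT t (killT t a p) ∈ Ideal.span {X t - embT t a} := by
  set I := Ideal.span ({X t - embT t a} : Set (MvPolynomial σ ℂ)) with hI
  have key : (Ideal.Quotient.mkₐ ℂ I).comp ((embT t).comp (killT t a)) =
      Ideal.Quotient.mkₐ ℂ I := by
    apply algHom_ext
    intro s
    by_cases h : s = t
    · subst h
      simp only [AlgHom.comp_apply, killT_X_self, Ideal.Quotient.mkₐ_eq_mk]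
      rw [Ideal.Quotient.eq]
      have : embT s a - X s = -(X s - embT s a) := by ring
      rw [this]
      exact Submodule.neg_mem _ (Ideal.subset_span rfl)
    · rw [AlgHom.comp_apply, AlgHom.comp_apply, killT_X_ne t a h, embT_X]
  have h2 := DFunLike.congr_fun key p
  simp only [AlgHom.comp_apply, Ideal.Quotient.mkₐ_eq_mk] at h2
  exact Ideal.Quotient.eq.mp h2.symm

lemma ker_killT_le (a) : RingHom.ker (killT t a).toRingHom ≤
    Ideal.span {X t - embT t a} := by
  intro p hp
  have hp' : killT t a p = 0 := hp
  have h := sub_embT_killT_mem t a p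
  rwa [hp', map_zero, sub_zero] at h

lemma eT_X_self : eT t (X t) = Polynomial.X := by
  simp only [eT, AlgEquiv.trans_apply, renameEquiv_apply, rename_X,
    Equiv.optionSubtypeNe_symm_self, optionEquivLeft_X_none]

lemma eT_embT (p) : eT t (embT t p) = Polynomial.C p := by
  have h : ((eT t : MvPolynomial σ ℂ →ₐ[ℂ] _).comp (embT t)) = Polynomial.CAlgHom := by
    apply algHom_ext
    intro s
    simp only [AlgHom.comp_apply, AlgHom.coe_coe, embT_X]
    show optionEquivLeft ℂ _ (rename (Equiv.optionSubtypeNe t).symm (X s.val)) = _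
    rw [rename_X, Equiv.optionSubtypeNe_symm_of_ne s.2, optionEquivLeft_X_some]
    simp [Polynomial.CAlgHom]
  exact DFunLike.congr_fun h p

lemma eT_comp_embT_ringHom :
    ((eT t : MvPolynomial σ ℂ →+* _).comp (embT t : _ →+* MvPolynomial σ ℂ))
      = (Polynomial.C : MvPolynomial {s : σ // s ≠ t} ℂ →+* _) :=
  RingHom.ext fun p => eT_embT t p

/-- Key step: adjoin the variable `t` linearly. -/
lemma NZD.polyUp {J₀ : Ideal (MvPolynomial {s : σ // s ≠ t} ℂ)} {c₀ d₀}
    (hd : NZD (J₀.map (embT t : _ →+* MvPolynomial σ ℂ)) (embT t d₀)) :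
    NZD (J₀.map (embT t : _ →+* MvPolynomial σ ℂ)) (embT t c₀ + embT t d₀ * X t) := by
  have hmap : (J₀.map (embT t : _ →+* MvPolynomial σ ℂ)).map
      (eT t : MvPolynomial σ ℂ →+* _) = J₀.map (Polynomial.C) := by
    rw [Ideal.map_map, eT_comp_embT_ringHom]
  -- downstairs NZD
  have hd0 : NZD J₀ d₀ := by
    intro f hf
    have h1 : embT t d₀ * embT t f ∈ J₀.map (embT t : _ →+* MvPolynomial σ ℂ) := by
      rw [← map_mul]; exact Ideal.mem_map_of_mem _ hf
    have h2 := hd _ h1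
    have h3 : Polynomial.C f ∈ J₀.map (Polynomial.C) := by
      rw [← hmap, ← eT_embT t f]
      exact Ideal.mem_map_of_mem _ h2
    have h4 := Ideal.mem_map_C_iff.mp h3 0
    simpa using h4
  apply NZD.pull (eT t : MvPolynomial σ ℂ →+* Polynomial (MvPolynomial {s : σ // s ≠ t} ℂ)) (eT t).surjective
  · intro p hp
    rw [RingHom.mem_ker] at hp
    have hp' : eT t p = 0 := hp
    have : p = 0 := by
      have := congrArg (eT t).symm hp'
      simpa using this
    rw [this]; exact Submodule.zero_mem _
  · rw [hmap]
    have he : (eT t : MvPolynomial σ ℂ →+* _) (embT t c₀ + embT t d₀ * X t)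
        = Polynomial.C c₀ + Polynomial.C d₀ * Polynomial.X := by
      show eT t (embT t c₀ + embT t d₀ * X t) = _
      rw [map_add, map_mul, eT_embT, eT_embT, eT_X_self]
    rw [he]
    exact NZD.poly hd0

end plumbing

open MvPolynomial

noncomputable section setup
set_option linter.unusedSectionVars false

variable {σ : Type} [DecidableEq σ]

def xv (v : ℕ → σ) (i : ℕ) : MvPolynomial σ ℂ := if i = 0 then 0 else X (v i)

def Gp (v : ℕ → σ) (k : ℕ) : MvPolynomial σ ℂ :=
  xv v k * (xv v k - C (1/2 : ℂ) * xv v (k-1) - C (1/2 : ℂ) * xv v (k+1))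

def Hp (v : ℕ → σ) (m : ℕ) (c : ℂ) : MvPolynomial σ ℂ :=
  xv v m * (C c * xv v m - C (1/2 : ℂ) * xv v (m-1))

def Ij (v : ℕ → σ) (j : ℕ) : Ideal (MvPolynomial σ ℂ) :=
  Ideal.span ((fun i => Gp v (i+1)) '' {i : ℕ | i < j})

def Good (c : ℂ) : Prop := ∃ q : ℚ, c = (q : ℂ) ∧ 1/2 ≤ q ∧ q ≤ 1

lemma Good.one : Good 1 := ⟨1, by norm_num⟩

lemma Good.ne_zero {c : ℂ} (h : Good c) : c ≠ 0 := by
  obtain ⟨q, rfl, hq1, hq2⟩ := h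
  have : (0:ℚ) < q := by linarith
  simp only [ne_eq, Rat.cast_eq_zero]
  exact ne_of_gt this

lemma Good.next {c : ℂ} (h : Good c) : Good (1 - 1/(4*c)) := by
  obtain ⟨q, rfl, hq1, hq2⟩ := h
  have hq0 : (0:ℚ) < q := by linarith
  refine ⟨1 - 1/(4*q), by push_cast; ring, ?_, ?_⟩
  · have h1 : 1/(4*q) ≤ 1/2 := by
      rw [div_le_div_iff₀ (by linarith) (by norm_num)]
      linarith
    linarith
  · have h2 : 0 < 1/(4*q) := by positivity
    linarith

@[simp] lemma xv_zero (v : ℕ → σ) : xv v 0 = 0 := rfl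

lemma xv_pos (v : ℕ → σ) {i : ℕ} (hi : i ≠ 0) : xv v i = X (v i) := if_neg hi

@[simp] lemma Ij_zero (v : ℕ → σ) : Ij v 0 = ⊥ := by
  simp [Ij]

lemma Ij_succ (v : ℕ → σ) (j : ℕ) :
    Ij v (j+1) = Ij v j ⊔ Ideal.span {Gp v (j+1)} := by
  rw [Ij, Ij, show {i : ℕ | i < j+1} = insert j {i : ℕ | i < j} by
    ext i; simp [Nat.lt_succ_iff_lt_or_eq, or_comm, le_iff_eq_or_lt]]
  rw [Set.image_insert_eq, Ideal.span_insert, sup_comm]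

section transfer
variable (v : ℕ → σ) (t : σ) (h1 : v 1 ≠ t)

/-- Restriction of the variable assignment avoiding `t`. -/
def vres : ℕ → {s : σ // s ≠ t} := fun i => if h : v i ≠ t then ⟨v i, h⟩ else ⟨v 1, h1⟩

lemma vres_eq {i : ℕ} (h : v i ≠ t) : vres v t h1 i = ⟨v i, h⟩ := dif_pos h

@[simp] lemma embT_C (x : ℂ) : embT t (C x) = C x := by simp [embT]

@[simp] lemma killT_C (a) (x : ℂ) : killT t a (C x) = C x := by
  simp [killT, algebraMap_eq]

lemma embT_xv {i : ℕ} (hi : i = 0 ∨ v i ≠ t) :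
    embT t (xv (vres v t h1) i) = xv v i := by
  by_cases hi0 : i = 0
  · subst hi0; simp
  · have h := hi.resolve_left hi0
    rw [xv_pos _ hi0, xv_pos _ hi0, vres_eq v t h1 h, embT_X]

lemma embT_Gp {k : ℕ} (h0 : k - 1 = 0 ∨ v (k-1) ≠ t) (h2 : k = 0 ∨ v k ≠ t)
    (h3 : v (k+1) ≠ t) :
    embT t (Gp (vres v t h1) k) = Gp v k := by
  rw [Gp, Gp, map_mul, map_sub, map_sub, map_mul, map_mul, embT_C,
    embT_xv v t h1 h2, embT_xv v t h1 h0, embT_xv v t h1 (Or.inr h3)]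

lemma killT_Gp_mid (a) {k : ℕ} (h0 : k - 1 = 0 ∨ v (k-1) ≠ t) (h2 : k = 0 ∨ v k ≠ t)
    (h3 : v (k+1) ≠ t) :
    killT t a (Gp v k) = Gp (vres v t h1) k := by
  rw [← embT_Gp v t h1 h0 h2 h3, killT_embT]

lemma map_Ij_kill (a) {j : ℕ} (hj : ∀ i, 1 ≤ i → i ≤ j + 1 → v i ≠ t) :
    Ideal.map (killT t a).toRingHom (Ij v j) = Ij (vres v t h1) j := by
  rw [Ij, Ij, Ideal.map_span, ← Set.image_comp]
  congr 1
  apply Set.image_congr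
  intro i hi
  simp only [Set.mem_setOf_eq] at hi
  exact killT_Gp_mid v t h1 a
    (by rcases Nat.eq_zero_or_pos i with rfl | h
        · left; rfl
        · right; exact hj i h (by omega))
    (Or.inr (hj (i+1) (by omega) (by omega)))
    (hj (i+2) (by omega) (by omega))

lemma map_Ij_emb {j : ℕ} (hj : ∀ i, 1 ≤ i → i ≤ j + 1 → v i ≠ t) :
    Ideal.map (embT t).toRingHom (Ij (vres v t h1) j) = Ij v j := by
  rw [Ij, Ij, Ideal.map_span, ← Set.image_comp]
  congr 1
  apply Set.image_congr
  intro i hi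
  simp only [Set.mem_setOf_eq] at hi
  exact embT_Gp v t h1
    (by rcases Nat.eq_zero_or_pos i with rfl | h
        · left; rfl
        · right; exact hj i h (by omega))
    (Or.inr (hj (i+1) (by omega) (by omega)))
    (hj (i+2) (by omega) (by omega))

end transfer
end setup

open MvPolynomial

noncomputable section mainpart
set_option linter.unusedSectionVars false

variable {σ : Type} [DecidableEq σ]

lemma killT_xv (v : ℕ → σ) (t : σ) (h1 : v 1 ≠ t) (a) {i : ℕ} (hi : i = 0 ∨ v i ≠ t) :
    killT t a (xv v i) = xv (vres v t h1) i := by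
  rw [← embT_xv v t h1 hi, killT_embT]

lemma killT_Gp_top (v : ℕ → σ) {N : ℕ} (hN : 2 ≤ N) (h1 : v 1 ≠ v N) (a)
    (hprev : v (N-1) ≠ v N) (hprev2 : N - 2 = 0 ∨ v (N-2) ≠ v N) :
    killT (v N) a (Gp v (N-1)) =
      xv (vres v (v N) h1) (N-1) * (xv (vres v (v N) h1) (N-1)
        - C (1/2 : ℂ) * xv (vres v (v N) h1) (N-2) - C (1/2 : ℂ) * a) := by
  rw [Gp, map_mul, map_sub, map_sub, map_mul, map_mul, killT_C,
    show N - 1 - 1 = N - 2 by omega, show N - 1 + 1 = N by omega,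
    killT_xv v (v N) h1 a (Or.inr hprev), killT_xv v (v N) h1 a hprev2,
    xv_pos v (show N ≠ 0 by omega), killT_X_self]

lemma killT_Gp_top_zero (v : ℕ → σ) {N : ℕ} (hN : 2 ≤ N) (h1 : v 1 ≠ v N)
    (hprev : v (N-1) ≠ v N) (hprev2 : N - 2 = 0 ∨ v (N-2) ≠ v N) :
    killT (v N) 0 (Gp v (N-1)) = Hp (vres v (v N) h1) (N-1) 1 := by
  rw [killT_Gp_top v hN h1 0 hprev hprev2, Hp, map_one,
    show N - 1 - 1 = N - 2 by omega]
  ring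

lemma killT_Gp_top_lin (v : ℕ → σ) {N : ℕ} (hN : 2 ≤ N) (h1 : v 1 ≠ v N) {c : ℂ}
    (hc : c ≠ 0) (hprev : v (N-1) ≠ v N) (hprev2 : N - 2 = 0 ∨ v (N-2) ≠ v N) :
    killT (v N) (C (1/(2*c)) * X (vres v (v N) h1 (N-1))) (Gp v (N-1)) =
      Hp (vres v (v N) h1) (N-1) (1 - 1/(4*c)) := by
  rw [killT_Gp_top v hN h1 _ hprev hprev2, Hp, show N - 1 - 1 = N - 2 by omega,
    ← xv_pos (vres v (v N) h1) (show N - 1 ≠ 0 by omega)]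
  have hC : C (1 - 1/(4*c) : ℂ) = (1 : MvPolynomial {s : σ // s ≠ v N} ℂ)
      - C (1/2 : ℂ) * C (1/(2*c) : ℂ) := by
    rw [← map_mul, ← map_one (C : ℂ →+* MvPolynomial {s : σ // s ≠ v N} ℂ), ← map_sub]
    congr 1
    ring
  rw [hC]
  ring

lemma killT_lin (v : ℕ → σ) {N : ℕ} (hN : 2 ≤ N) (h1 : v 1 ≠ v N) {c : ℂ} (hc : c ≠ 0)
    (hprev : v (N-1) ≠ v N) :
    killT (v N) (C (1/(2*c)) * X (vres v (v N) h1 (N-1)))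
      (C c * xv v N - C (1/2 : ℂ) * xv v (N-1)) = 0 := by
  rw [map_sub, map_mul, map_mul, killT_C, killT_C,
    xv_pos v (show N ≠ 0 by omega), killT_X_self,
    killT_xv v (v N) h1 _ (Or.inr hprev),
    xv_pos (vres v (v N) h1) (show N - 1 ≠ 0 by omega)]
  rw [← mul_assoc, ← map_mul]
  have : c * (1/(2*c)) = 1/2 := by field_simp
  rw [this, sub_self]

lemma emb_lin_a (v : ℕ → σ) {N : ℕ} (hN : 2 ≤ N) (h1 : v 1 ≠ v N) (c : ℂ)
    (hprev : v (N-1) ≠ v N) :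
    embT (v N) (C (1/(2*c)) * X (vres v (v N) h1 (N-1)))
      = C (1/(2*c)) * X (v (N-1)) := by
  rw [map_mul, embT_C, vres_eq v (v N) h1 hprev, embT_X]

lemma ker_lin (v : ℕ → σ) {N : ℕ} (hN : 2 ≤ N) (h1 : v 1 ≠ v N) {c : ℂ} (hc : c ≠ 0)
    (hprev : v (N-1) ≠ v N) :
    X (v N) - embT (v N) (C (1/(2*c)) * X (vres v (v N) h1 (N-1)))
      ∈ Ideal.span {C c * xv v N - C (1/2 : ℂ) * xv v (N-1)} := by
  rw [emb_lin_a v hN h1 c hprev]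
  rw [Ideal.mem_span_singleton]
  refine ⟨C (1/c), ?_⟩
  rw [xv_pos v (show N ≠ 0 by omega), xv_pos v (show N - 1 ≠ 0 by omega)]
  have h2 : (C c * X (v N) - C (1/2 : ℂ) * X (v (N-1))) * C (1/c)
      = C (c * (1/c)) * X (v N) - C ((1/2) * (1/c)) * X (v (N-1)) := by
    rw [map_mul, map_mul]; ring
  rw [h2]
  have h3 : c * (1/c) = 1 := by field_simp
  have h4 : (1/2 : ℂ) * (1/c) = 1/(2*c) := by ring
  rw [h3, h4, map_one, one_mul]

lemma lin_ne_zero (v : ℕ → σ) {N : ℕ} (hN : 2 ≤ N) (c : ℂ)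
    (hprev : v (N-1) ≠ v N) :
    C c * xv v N - C (1/2 : ℂ) * xv v (N-1) ≠ 0 := by
  intro h
  have := congrArg (aeval (fun s : σ => if s = v (N-1) then (1:ℂ) else 0)) h
  rw [map_sub, map_mul, map_mul, aeval_C, aeval_C,
    xv_pos v (show N ≠ 0 by omega), xv_pos v (show N - 1 ≠ 0 by omega),
    aeval_X, aeval_X, if_neg (Ne.symm hprev), if_pos rfl] at this
  simp only [mul_zero, mul_one, zero_sub, map_zero, Algebra.algebraMap_self,
    RingHom.id_apply] at this
  have h2 : (1/2 : ℂ) = 0 := by linear_combination -this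
  norm_num at h2

lemma vres_injOn (v : ℕ → σ) {N : ℕ} (h1 : v 1 ≠ v N)
    (hinj : Set.InjOn v (Set.Icc 1 N)) {M : ℕ} (hM : M ≤ N - 1) (hN : 1 ≤ N) :
    Set.InjOn (vres v (v N) h1) (Set.Icc 1 M) := by
  intro i hi i' hi' h
  simp only [Set.mem_Icc] at hi hi'
  have hvi : v i ≠ v N := fun he => by
    have := hinj (Set.mem_Icc.mpr ⟨hi.1, by omega⟩) (Set.mem_Icc.mpr ⟨hN, le_rfl⟩) he
    omega
  have hvi' : v i' ≠ v N := fun he => by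
    have := hinj (Set.mem_Icc.mpr ⟨hi'.1, by omega⟩) (Set.mem_Icc.mpr ⟨hN, le_rfl⟩) he
    omega
  rw [vres_eq v (v N) h1 hvi, vres_eq v (v N) h1 hvi'] at h
  have : v i = v i' := congrArg Subtype.val h
  exact hinj (Set.mem_Icc.mpr ⟨hi.1, by omega⟩) (Set.mem_Icc.mpr ⟨hi'.1, by omega⟩) this

/-- The statement proved by strong induction. -/
def KeyStmt (N : ℕ) : Prop :=
  ∀ (σ : Type) (_ : DecidableEq σ) (v : ℕ → σ),
    (1 ≤ N → Set.InjOn v (Set.Icc 1 (N+1)) → NZD (Ij v (N-1)) (Gp v N)) ∧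
    (∀ c : ℂ, Good c → 1 ≤ N → Set.InjOn v (Set.Icc 1 N) → NZD (Ij v (N-1)) (Hp v N c))

lemma ladder {N : ℕ} (IH : ∀ M, M < N → KeyStmt M) (hN : 2 ≤ N)
    (v : ℕ → σ) (hinj : Set.InjOn v (Set.Icc 1 N)) (h1 : v 1 ≠ v N)
    (u : MvPolynomial σ ℂ) (a : MvPolynomial {s : σ // s ≠ v N} ℂ)
    (hu0 : u ≠ 0)
    (hker : X (v N) - embT (v N) a ∈ Ideal.span {u})
    (hukill : killT (v N) a u = 0)
    (c' : ℂ) (hc' : Good c')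
    (hGtop : killT (v N) a (Gp v (N-1)) = Hp (vres v (v N) h1) (N-1) c') :
    ∀ j, j ≤ N - 1 → NZD (Ij v j) u := by
  have hne : ∀ i, 1 ≤ i → i ≤ N - 1 → v i ≠ v N := by
    intro i hi1 hi2 he
    have := hinj (Set.mem_Icc.mpr ⟨hi1, by omega⟩)
      (Set.mem_Icc.mpr ⟨by omega, le_rfl⟩) he
    omega
  intro j
  induction j with
  | zero => intro _; rw [Ij_zero]; exact NZD.bot hu0
  | succ j ihj =>
    intro hj
    have hstep : NZD (Ij v j ⊔ Ideal.span {u}) (Gp v (j+1)) := by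
      apply NZD.pull (killT (v N) a).toRingHom (killT_surjective _ _)
      · exact le_trans (ker_killT_le _ _)
          (le_trans (Ideal.span_le.mpr (Set.singleton_subset_iff.mpr hker)) le_sup_right)
      · rw [Ideal.map_sup, map_Ij_kill v (v N) h1 a
          (fun i hi1 hi2 => hne i hi1 (by omega)), Ideal.map_span, Set.image_singleton]
        have h0 : (killT (v N) a).toRingHom u = 0 := hukill
        rw [h0]
        rw [show Ideal.span ({0} : Set (MvPolynomial {s : σ // s ≠ v N} ℂ)) = ⊥ from
          Ideal.span_singleton_eq_bot.mpr rfl, sup_bot_eq]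
        by_cases hcase : j + 2 < N
        · show NZD (Ij (vres v (v N) h1) j) (killT (v N) a (Gp v (j + 1)))
          rw [killT_Gp_mid v (v N) h1 a
            (by rcases Nat.eq_zero_or_pos j with rfl | h
                · left; rfl
                · right; exact hne j h (by omega))
            (Or.inr (hne (j+1) (by omega) (by omega)))
            (hne (j+2) (by omega) (by omega))]
          exact (IH (j+1) (by omega) _ (Classical.decEq _) (vres v (v N) h1)).1 (by omega)
            (vres_injOn v h1 hinj (by omega) (by omega))
        · have hEq : j + 2 = N := by omega
          show NZD (Ij (vres v (v N) h1) j) (killT (v N) a (Gp v (j + 1)))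
          rw [show j + 1 = N - 1 by omega, hGtop]
          have := (IH (N-1) (by omega) _ (Classical.decEq _) (vres v (v N) h1)).2 c' hc' (by omega)
            (vres_injOn v h1 hinj le_rfl (by omega))
          rwa [show N - 1 - 1 = j by omega] at this
    rw [Ij_succ]
    exact NZD.swap (ihj (by omega)) hstep

end mainpart

open MvPolynomial

theorem key : ∀ N, KeyStmt N := by
  intro N
  induction N using Nat.strong_induction_on with
  | _ N IH =>
    intro σ dec v
    letI := dec
    have hXne : ∀ s : σ, (X s : MvPolynomial σ ℂ) ≠ 0 := fun s => X_ne_zero s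
    constructor
    · -- STEP: NZD (Ij v (N-1)) (Gp v N)
      intro hN1 hinj
      have h1' : v 1 ≠ v (N+1) := fun he => by
        have := hinj (Set.mem_Icc.mpr ⟨le_rfl, by omega⟩)
          (Set.mem_Icc.mpr ⟨by omega, le_rfl⟩) he
        omega
      have hneN : ∀ i, 1 ≤ i → i ≤ N → v i ≠ v (N+1) := fun i hi1 hi2 he => by
        have := hinj (Set.mem_Icc.mpr ⟨hi1, by omega⟩)
          (Set.mem_Icc.mpr ⟨by omega, le_rfl⟩) he
        omega
      have hmapIj : Ideal.map (embT (v (N+1))).toRingHom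
          (Ij (vres v (v (N+1)) h1') (N-1)) = Ij v (N-1) :=
        map_Ij_emb v (v (N+1)) h1' (fun i hi1 hi2 => hneN i hi1 (by omega))
      have hvar : NZD (Ij v (N-1)) (X (v N)) := by
        rcases Nat.lt_or_ge N 2 with h2 | h2
        · have hN' : N = 1 := by omega
          subst hN'
          rw [show (1:ℕ)-1 = 0 from rfl, Ij_zero]
          exact NZD.bot (hXne _)
        · have h1N : v 1 ≠ v N := fun he => by
            have := hinj (Set.mem_Icc.mpr ⟨le_rfl, by omega⟩)
              (Set.mem_Icc.mpr ⟨by omega, by omega⟩) he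
            omega
          have hinj' : Set.InjOn v (Set.Icc 1 N) :=
            hinj.mono (Set.Icc_subset_Icc_right (by omega))
          have hprev : v (N-1) ≠ v N := fun he => by
            have := hinj' (Set.mem_Icc.mpr ⟨by omega, by omega⟩)
              (Set.mem_Icc.mpr ⟨by omega, le_rfl⟩) he
            omega
          have hprev2 : N - 2 = 0 ∨ v (N-2) ≠ v N := by
            rcases Nat.eq_zero_or_pos (N-2) with h | h
            · exact Or.inl h
            · refine Or.inr (fun he => ?_)
              have := hinj' (Set.mem_Icc.mpr ⟨by omega, by omega⟩)
                (Set.mem_Icc.mpr ⟨by omega, le_rfl⟩) he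
              omega
          exact ladder IH h2 v hinj' h1N (X (v N)) 0 (hXne _)
            (by rw [map_zero, sub_zero]; exact Ideal.subset_span rfl)
            (killT_X_self _ 0) 1 Good.one
            (killT_Gp_top_zero v h2 h1N hprev hprev2) (N-1) le_rfl
      have keyEq : Gp v N =
          embT (v (N+1)) (xv (vres v (v (N+1)) h1') N *
            (xv (vres v (v (N+1)) h1') N - C (1/2 : ℂ) * xv (vres v (v (N+1)) h1') (N-1)))
          + embT (v (N+1)) (-(C (1/2 : ℂ) * xv (vres v (v (N+1)) h1') N)) * X (v (N+1)) := by
        rw [map_neg, map_mul, map_sub, map_mul, map_mul, embT_C,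
          embT_xv v (v (N+1)) h1' (Or.inr (hneN N hN1 le_rfl)),
          embT_xv v (v (N+1)) h1' (by
            rcases Nat.eq_zero_or_pos (N-1) with h | h
            · exact Or.inl h
            · exact Or.inr (hneN (N-1) h (by omega))),
          Gp, xv_pos v (show N + 1 ≠ 0 by omega)]
        ring
      have hmapIj' : Ideal.map ((embT (v (N+1)) : _ →+* MvPolynomial σ ℂ))
          (Ij (vres v (v (N+1)) h1') (N-1)) = Ij v (N-1) := hmapIj
      rw [keyEq, ← hmapIj']
      apply NZD.polyUp
      rw [map_neg, map_mul, embT_C,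
        embT_xv v (v (N+1)) h1' (Or.inr (hneN N hN1 le_rfl)),
        xv_pos v (show N ≠ 0 by omega), hmapIj']
      have heq : -(C (1/2 : ℂ) * X (v N)) = C (-(1/2) : ℂ) * X (v N) := by
        rw [map_neg]; ring
      rw [heq]
      exact NZD.C_mul (by norm_num) hvar
    · -- LAST: NZD (Ij v (N-1)) (Hp v N c)
      intro c hc hN1 hinj
      rcases Nat.lt_or_ge N 2 with h2 | h2
      · have hN' : N = 1 := by omega
        subst hN'
        rw [show (1:ℕ)-1 = 0 from rfl, Ij_zero]
        apply NZD.bot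
        rw [Hp]
        simp only [show (1:ℕ)-1 = 0 from rfl, xv_zero, mul_zero, sub_zero,
          xv_pos v one_ne_zero]
        exact mul_ne_zero (hXne _) (mul_ne_zero (fun h => hc.ne_zero (by
          rwa [MvPolynomial.C_eq_zero] at h)) (hXne _))
      · have h1N : v 1 ≠ v N := fun he => by
          have := hinj (Set.mem_Icc.mpr ⟨le_rfl, by omega⟩)
            (Set.mem_Icc.mpr ⟨by omega, le_rfl⟩) he
          omega
        have hprev : v (N-1) ≠ v N := fun he => by
          have := hinj (Set.mem_Icc.mpr ⟨by omega, by omega⟩)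
            (Set.mem_Icc.mpr ⟨by omega, le_rfl⟩) he
          omega
        have hprev2 : N - 2 = 0 ∨ v (N-2) ≠ v N := by
          rcases Nat.eq_zero_or_pos (N-2) with h | h
          · exact Or.inl h
          · refine Or.inr (fun he => ?_)
            have := hinj (Set.mem_Icc.mpr ⟨by omega, by omega⟩)
              (Set.mem_Icc.mpr ⟨by omega, le_rfl⟩) he
            omega
        have hvar : NZD (Ij v (N-1)) (X (v N)) :=
          ladder IH h2 v hinj h1N (X (v N)) 0 (hXne _)
            (by rw [map_zero, sub_zero]; exact Ideal.subset_span rfl)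
            (killT_X_self _ 0) 1 Good.one
            (killT_Gp_top_zero v h2 h1N hprev hprev2) (N-1) le_rfl
        have hlin : NZD (Ij v (N-1)) (C c * xv v N - C (1/2 : ℂ) * xv v (N-1)) :=
          ladder IH h2 v hinj h1N _ (C (1/(2*c)) * X (vres v (v N) h1N (N-1)))
            (lin_ne_zero v h2 c hprev)
            (ker_lin v h2 h1N hc.ne_zero hprev)
            (killT_lin v h2 h1N hc.ne_zero hprev)
            (1 - 1/(4*c)) hc.next
            (killT_Gp_top_lin v h2 h1N hc.ne_zero hprev hprev2) (N-1) le_rfl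
        have hvar' : NZD (Ij v (N-1)) (xv v N) := by
          rw [xv_pos v (show N ≠ 0 by omega)]; exact hvar
        rw [Hp]
        exact NZD.mul hvar' hlin

open MvPolynomial

section bridge
variable {R : Type*} [CommRing R]

lemma ideal_smul_top (I : Ideal R) : (I • (⊤ : Submodule R R)) = I := by
  rw [smul_eq_mul, Ideal.mul_top]

lemma NZD.isSMulRegular {I : Ideal R} {r : R} (h : NZD I r) :
    IsSMulRegular (R ⧸ (I • (⊤ : Submodule R R))) r := by
  intro x y hxy
  obtain ⟨a, rfl⟩ := Submodule.Quotient.mk_surjective _ x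
  obtain ⟨b, rfl⟩ := Submodule.Quotient.mk_surjective _ y
  simp only [← Submodule.Quotient.mk_smul] at hxy
  rw [Submodule.Quotient.eq, ideal_smul_top] at hxy
  rw [Submodule.Quotient.eq, ideal_smul_top]
  have h1 : r * (a - b) ∈ I := by
    have : r • a - r • b = r * (a - b) := by simp [smul_eq_mul]; ring
    rwa [this] at hxy
  exact h _ h1

end bridge

lemma mem_take_ofFn {α : Type*} {n : ℕ} (F : Fin n → α) {i : ℕ} (hi : i ≤ n) (r : α) :
    r ∈ (List.ofFn F).take i ↔ ∃ j : Fin n, j.1 < i ∧ F j = r := by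
  rw [List.mem_iff_getElem]
  constructor
  · rintro ⟨k, hk, rfl⟩
    have hk' : k < i := by
      have := hk
      simp at this; omega
    have hkn : k < n := by omega
    refine ⟨⟨k, hkn⟩, hk', ?_⟩
    rw [List.getElem_take, List.getElem_ofFn]
  · rintro ⟨j, hj, rfl⟩
    refine ⟨j.1, ?_, ?_⟩
    · rw [List.length_take]; simp; omega
    · rw [List.getElem_take, List.getElem_ofFn]

open MvPolynomial

theorem peterson_relations_regular_sequence (n : ℕ) (hn : 2 ≤ n)
    (ξ : ℕ → MvPolynomial (Fin (n - 1)) ℂ)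
    (hξ : ∀ k : Fin (n - 1), ξ (k.1 + 1) = MvPolynomial.X k)
    (hξ0 : ξ 0 = 0) (hξn : ξ n = 0) :
    RingTheory.Sequence.IsRegular (MvPolynomial (Fin (n - 1)) ℂ)
      (List.ofFn fun k : Fin (n - 1) =>
        ξ (k.1 + 1) *
          (ξ (k.1 + 1) - MvPolynomial.C ((1:ℂ)/2) * ξ k.1
            - MvPolynomial.C ((1:ℂ)/2) * ξ (k.1 + 2))) := by
  classical
  set F : Fin (n-1) → MvPolynomial (Fin (n-1)) ℂ := fun k : Fin (n - 1) =>
        ξ (k.1 + 1) *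
          (ξ (k.1 + 1) - MvPolynomial.C ((1:ℂ)/2) * ξ k.1
            - MvPolynomial.C ((1:ℂ)/2) * ξ (k.1 + 2)) with hFdef
  have hn2 : n - 2 < n - 1 := by omega
  set v : ℕ → Fin (n-1) := (fun i => ⟨min (i-1) (n-2), by omega⟩) with hvdef
  have hvval : ∀ i, 1 ≤ i → i ≤ n-1 → (v i).1 = i - 1 := by
    intro i h1 h2
    simp only [hvdef]
    omega
  have hinj : Set.InjOn v (Set.Icc 1 (n-1)) := by
    intro i hi j hj h
    simp only [Set.mem_Icc] at hi hj
    have h1 := hvval i hi.1 hi.2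
    have h2 := hvval j hj.1 hj.2
    have : (v i).1 = (v j).1 := by rw [h]
    omega
  have hxi : ∀ i, 1 ≤ i → i ≤ n-1 → ξ i = X (v i) := by
    intro i h1 h2
    have hk := hξ ⟨i-1, by omega⟩
    simp only at hk
    rw [show i - 1 + 1 = i by omega] at hk
    rw [hk]
    congr 1
    apply Fin.ext
    rw [hvval i h1 h2]
  have hxv : ∀ i, i ≤ n-1 → xv v i = ξ i := by
    intro i h2
    rcases Nat.eq_zero_or_pos i with rfl | h1
    · rw [xv_zero, hξ0]
    · rw [xv_pos v (by omega), hxi i h1 h2]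
  have hFG : ∀ (k : Fin (n-1)), k.1 < n - 2 → F k = Gp v (k.1+1) := by
    intro k hk
    rw [hFdef, Gp]
    simp only [Nat.add_sub_cancel]
    rw [hxv (k.1+1) (by omega), hxv k.1 (by omega), hxv (k.1+2) (by omega)]
  have hFH : ∀ (k : Fin (n-1)), k.1 = n - 2 → F k = Hp v (n-1) 1 := by
    intro k hk
    show ξ (k.1 + 1) * (ξ (k.1 + 1) - MvPolynomial.C ((1:ℂ)/2) * ξ k.1
            - MvPolynomial.C ((1:ℂ)/2) * ξ (k.1 + 2)) = Hp v (n-1) 1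
    rw [hk, show n - 2 + 1 = n - 1 by omega, show n - 2 + 2 = n by omega, hξn,
      Hp, map_one, show n - 1 - 1 = n - 2 by omega,
      hxv (n-1) le_rfl, hxv (n-2) (by omega)]
    ring
  rw [RingTheory.Sequence.isRegular_iff]
  constructor
  · rw [RingTheory.Sequence.isWeaklyRegular_iff]
    intro i hi
    have hi' : i < n - 1 := by
      have := hi; rwa [List.length_ofFn] at this
    have hget : (List.ofFn F)[i] = F ⟨i, hi'⟩ := by
      rw [List.getElem_ofFn]
    have hIdeal : Ideal.ofList ((List.ofFn F).take i) = Ij v i := by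
      rw [Ij]
      apply congrArg Ideal.span
      ext r
      simp only [Set.mem_setOf_eq, Set.mem_image, Set.mem_Iio]
      rw [mem_take_ofFn F (by omega) r]
      constructor
      · rintro ⟨j, hj, rfl⟩
        exact ⟨j.1, hj, (hFG j (show j.1 < n - 2 by omega)).symm⟩
      · rintro ⟨j, hj, rfl⟩
        refine ⟨⟨j, by omega⟩, ?_, hFG ⟨j, by omega⟩ (show j < n - 2 by omega)⟩
        show j < i
        exact hj
    rw [hget, hIdeal]
    apply NZD.isSMulRegular
    by_cases hlast : i = n - 2
    · rw [hFH ⟨i, hi'⟩ hlast]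
      have := (key (n-1) (Fin (n-1)) (Classical.decEq _) v).2 1 Good.one (by omega) hinj
      rwa [show n - 1 - 1 = i by omega] at this
    · rw [hFG ⟨i, hi'⟩ (show i < n - 2 by omega)]
      have := (key (i+1) (Fin (n-1)) (Classical.decEq _) v).1 (by omega)
        (hinj.mono (Set.Icc_subset_Icc_right (by omega)))
      exact this
  · rw [ideal_smul_top]
    intro h
    have h1 : (1 : MvPolynomial (Fin (n-1)) ℂ) ∈ Ideal.ofList (List.ofFn F) := by
      rw [← h]; trivial
    have hle : Ideal.ofList (List.ofFn F) ≤
        RingHom.ker (aeval (fun _ : Fin (n-1) => (0:ℂ))).toRingHom := by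
      rw [Ideal.span_le]
      intro r hr
      simp only [Set.mem_setOf_eq, List.mem_ofFn] at hr
      obtain ⟨k, rfl⟩ := hr
      have hFk : F k = X k * (ξ (k.1 + 1) - MvPolynomial.C ((1:ℂ)/2) * ξ k.1
            - MvPolynomial.C ((1:ℂ)/2) * ξ (k.1 + 2)) := by
        show ξ (k.1 + 1) * _ = _
        rw [hξ k]
      rw [SetLike.mem_coe, RingHom.mem_ker]
      show (aeval (fun _ : Fin (n-1) => (0:ℂ))) (F k) = 0
      rw [hFk, map_mul, aeval_X, zero_mul]
    have h2 := hle h1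
    simp only [RingHom.mem_ker] at h2
    have h3 : (1 : ℂ) = 0 := by simpa using h2
    norm_num at h3
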